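/- Let g : ℝ → ℝ be continuously differentiable, even, and π-periodic, let n, m be positive integers, and set μ_i* = m·i·π/n for i = 0,…,n−1. Then for every i, the partial derivative ∂G/∂μ_i of G(μ₀,…,μ_{n−1}) = (1/π)∫_{-π/2}^{π/2} ∏_{i=0}^{n−1} g(x + μ_i) dx vanishes at the point (μ₀*,…,μ_{n−1}*). -/

import Mathlib

open Real MeasureTheory

theorem stmt_16 (g : ℝ → ℝ) (hg : ContDiff ℝ 1 g)
    (heven : ∀ x, g (-x) = g x) (hper : ∀ x, g (x + π) = g x)
    (n m : ℕ) (hn : 0 < n) (hm : 0 < m)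
    (μstar : Fin n → ℝ) (hμ : ∀ i : Fin n, μstar i = m * i * π / n) (i : Fin n) :
    HasDerivAt
      (fun t => (1 / π) * ∫ x in (-(π/2))..(π/2), ∏ j : Fin n, g (x + Function.update μstar i t j))
      0 (μstar i) := by
  haveI : NeZero n := ⟨hn.ne'⟩
  have hπ := Real.pi_pos
  have hn' : (n : ℝ) ≠ 0 := Nat.cast_ne_zero.mpr hn.ne'
  have hgc : Continuous g := hg.continuous
  have hg'c : Continuous (deriv g) := hg.continuous_deriv le_rfl
  have hgd : ∀ x, HasDerivAt g (deriv g x) x := fun x =>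
    ((hg.differentiable one_ne_zero) x).hasDerivAt
  have hperiodic : Function.Periodic g π := hper
  have hper' : ∀ (k : ℤ) (y : ℝ), g (y + k * π) = g y := fun k y => hperiodic.int_mul k y
  set c := μstar i with hc
  set Q : ℝ → ℝ := fun x => ∏ j ∈ Finset.univ.erase i, g (x + μstar j) with hQ
  have hQc : Continuous Q := by
    apply continuous_finset_prod
    intro j _
    exact hgc.comp (continuous_id.add continuous_const)
  -- rewrite the product
  have hprod : ∀ t x : ℝ,
      (∏ j : Fin n, g (x + Function.update μstar i t j)) = g (x + t) * Q x := by
    intro t x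
    rw [← Finset.mul_prod_erase Finset.univ _ (Finset.mem_univ i), Function.update_self]
    congr 1
    refine Finset.prod_congr rfl fun j hj => ?_
    rw [Function.update_of_ne (Finset.ne_of_mem_erase hj)]
  set F : ℝ → ℝ := fun t => ∫ x in (-(π/2))..(π/2), g (x + t) * Q x with hF
  have hfun : (fun t => (1 / π) *
      ∫ x in (-(π/2))..(π/2), ∏ j : Fin n, g (x + Function.update μstar i t j))
      = fun t => (1 / π) * F t := by
    funext t
    congr 1
    exact intervalIntegral.integral_congr fun x _ => hprod t x
  -- periodicity of Q
  have hQper : ∀ x, Q (x + π) = Q x := by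
    intro x
    refine Finset.prod_congr rfl fun j _ => ?_
    rw [show x + π + μstar j = x + μstar j + π by ring, hper]
  -- the val lemma
  have hμval : ∀ j : Fin n, ∃ k : ℤ,
      ((i + i - j : Fin n).val : ℤ) = i.val + i.val - j.val + k * n := by
    intro j
    have h2 : (i + i).val = (i.val + i.val) % n := by rw [Fin.add_def]
    have h1 : (i + i - j).val = ((n - j.val) + (i.val + i.val) % n) % n := by
      rw [Fin.sub_def, h2]
    obtain ⟨q1, h3⟩ : ∃ q, ((n - j.val) + (i.val + i.val) % n) % n + n * q
        = (n - j.val) + (i.val + i.val) % n := ⟨_, Nat.mod_add_div _ _⟩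
    obtain ⟨q2, h4⟩ : ∃ q, (i.val + i.val) % n + n * q = i.val + i.val :=
      ⟨_, Nat.mod_add_div _ _⟩
    have hj := j.isLt
    refine ⟨1 - (q1 : ℤ) - q2, ?_⟩
    have hgoal : (i + i - j).val + j.val + n * q1 + n * q2 = i.val + i.val + n := by
      rw [h1]; omega
    have hcst := congrArg (fun x : ℕ => (x : ℤ)) hgoal
    push_cast at hcst
    linear_combination hcst
  -- symmetry of Q about -c
  have hQsymm : ∀ x, Q (-(2*c) - x) = Q x := by
    intro x
    have key : ∀ j : Fin n, g (-(2*c) - x + μstar j) = g (x + μstar (i + i - j)) := by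
      intro j
      obtain ⟨k, hk⟩ := hμval j
      have hkr : ((i + i - j : Fin n).val : ℝ) = i.val + i.val - j.val + k * n := by
        exact_mod_cast hk
      have h1 : -(2*c) - x + μstar j = -(x + (2*c - μstar j)) := by ring
      rw [h1, heven]
      have h2 : x + (2*c - μstar j) = (x + μstar (i + i - j)) + (-k * m) * π := by
        rw [hc, hμ i, hμ j, hμ (i + i - j)]
        field_simp
        push_cast [hkr]
        ring
      rw [h2]
      exact_mod_cast hper' (-k * m) (x + μstar (i + i - j))
    calc Q (-(2*c) - x) = ∏ j ∈ Finset.univ.erase i, g (x + μstar (i + i - j)) :=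
          Finset.prod_congr rfl fun j _ => key j
      _ = Q x := by
          refine Finset.prod_nbij' (fun j => i + i - j) (fun j => i + i - j)
            ?_ ?_ ?_ ?_ ?_
          · intro a ha
            rcases Finset.mem_erase.mp ha with ⟨hne, -⟩
            refine Finset.mem_erase.mpr ⟨fun h => hne ?_, Finset.mem_univ _⟩
            have h3 := sub_eq_iff_eq_add.mp h
            exact (add_left_cancel h3).symm
          · intro a ha
            rcases Finset.mem_erase.mp ha with ⟨hne, -⟩
            refine Finset.mem_erase.mpr ⟨fun h => hne ?_, Finset.mem_univ _⟩
            have h3 := sub_eq_iff_eq_add.mp h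
            exact (add_left_cancel h3).symm
          · intro a _; exact sub_sub_cancel (i + i) a
          · intro a _; exact sub_sub_cancel (i + i) a
          · intro a _; rfl
  -- symmetry of F about c
  have hsymm : ∀ s : ℝ, F (c + s) = F (c - s) := by
    intro s
    set h : ℝ → ℝ := fun y => g (y + (c + s)) * Q y with hh
    have hfper : Function.Periodic h π := by
      intro y
      simp only [hh]
      rw [show y + π + (c + s) = y + (c + s) + π by ring, hper, hQper]
    have step1 : F (c - s) = ∫ x in (-(π/2))..(π/2), h (-(x + 2*c)) :=
      intervalIntegral.integral_congr fun x _ => by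
        simp only [hh]
        rw [show -(x + 2*c) + (c + s) = -(x + (c - s)) by ring, heven,
          show -(x + 2*c) = -(2*c) - x by ring, hQsymm]
    have step2 : (∫ x in (-(π/2))..(π/2), h (-(x + 2*c)))
        = ∫ x in (-(π/2) + 2*c)..(π/2 + 2*c), h (-x) :=
      intervalIntegral.integral_comp_add_right (fun y => h (-y)) (2*c)
    have step3 : (∫ x in (-(π/2) + 2*c)..(π/2 + 2*c), h (-x))
        = ∫ x in (-(π/2 + 2*c))..(-(-(π/2) + 2*c)), h x :=
      intervalIntegral.integral_comp_neg h
    have step4 : (∫ x in (-(π/2 + 2*c))..(-(-(π/2) + 2*c)), h x)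
        = ∫ x in (-(2*c) - π/2)..((-(2*c) - π/2) + π), h x := by
      rw [show -(π/2 + 2*c) = -(2*c) - π/2 by ring,
        show -(-(π/2) + 2*c) = (-(2*c) - π/2) + π by ring]
    have step5 : (∫ x in (-(2*c) - π/2)..((-(2*c) - π/2) + π), h x)
        = ∫ x in (-(π/2))..(-(π/2) + π), h x :=
      hfper.intervalIntegral_add_eq _ _
    have step6 : (∫ x in (-(π/2))..(-(π/2) + π), h x) = F (c + s) := by
      rw [show -(π/2) + π = π/2 by ring]
    rw [step1, step2, step3, step4, step5, step6]
  -- differentiability of F at c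
  obtain ⟨M, hM⟩ := (isCompact_Icc (a := c - 1 - π/2) (b := c + 1 + π/2)).exists_bound_of_continuousOn
    hg'c.continuousOn
  have hDf := (intervalIntegral.hasDerivAt_integral_of_dominated_loc_of_deriv_le
      (F := fun u x => g (x + u) * Q x) (F' := fun u x => deriv g (x + u) * Q x)
      (x₀ := c) (a := -(π/2)) (b := π/2) (μ := volume) (bound := fun x => M * |Q x|)
      (Metric.ball_mem_nhds c one_pos)
      (Filter.Eventually.of_forall fun u =>
        ((hgc.comp (continuous_id.add continuous_const)).mul hQc).aestronglyMeasurable)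
      (((hgc.comp (continuous_id.add continuous_const)).mul hQc).intervalIntegrable _ _)
      ((hg'c.comp (continuous_id.add continuous_const)).mul hQc).aestronglyMeasurable
      (Filter.Eventually.of_forall ?_)
      ((continuous_const.mul hQc.abs).intervalIntegrable _ _)
      (Filter.Eventually.of_forall ?_)).2
  · -- main conclusion
    have hD : HasDerivAt F (∫ x in (-(π/2))..(π/2), deriv g (x + c) * Q x) c := hDf
    set D := ∫ x in (-(π/2))..(π/2), deriv g (x + c) * Q x with hDdef
    have hD' : HasDerivAt F D (c + 0) := by rwa [add_zero]
    have hK1 : HasDerivAt (fun s : ℝ => F (c + s)) D 0 := by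
      have := hD'.comp 0 ((hasDerivAt_id (0:ℝ)).const_add c)
      simpa [Function.comp_def] using this
    have hK2 : HasDerivAt (fun s : ℝ => F (c + s)) (-D) 0 := by
      have hK1' : HasDerivAt (fun s : ℝ => F (c + s)) D (-0 : ℝ) := by rwa [neg_zero]
      have hcomp := hK1'.comp 0 (hasDerivAt_neg (0:ℝ))
      have heq : ((fun s : ℝ => F (c + s)) ∘ fun s : ℝ => -s) = fun s : ℝ => F (c + s) := by
        funext s
        show F (c + -s) = F (c + s)
        rw [← sub_eq_add_neg, ← hsymm s]
      rw [heq] at hcomp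
      simpa [mul_comm] using hcomp
    have hD0 : D = 0 := by
      have := hK1.unique hK2
      linarith
    rw [hfun]
    have final := HasDerivAt.const_mul (1/π) hD
    rw [hD0, mul_zero] at final
    exact final
  · -- bound
    intro x hx u hu
    have hx' : x ∈ Set.Icc (-(π/2)) (π/2) := by
      rw [Set.uIoc_of_le (by linarith : -(π/2) ≤ π/2)] at hx
      exact Set.Ioc_subset_Icc_self hx
    have hu' : |u - c| < 1 := by rwa [Metric.mem_ball, Real.dist_eq] at hu
    rcases abs_lt.mp hu' with ⟨hu1, hu2⟩
    have hmem : x + u ∈ Set.Icc (c - 1 - π/2) (c + 1 + π/2) := by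
      rcases hx' with ⟨hx1, hx2⟩
      constructor <;> [linarith; linarith]
    have hb := hM _ hmem
    rw [Real.norm_eq_abs] at hb ⊢
    rw [abs_mul]
    exact mul_le_mul_of_nonneg_right hb (abs_nonneg _)
  · -- differentiability of the integrand
    intro x _ u _
    have h0 : HasDerivAt (fun v : ℝ => g (x + v)) (deriv g (x + u)) u := by
      have := (hgd (x + u)).comp u ((hasDerivAt_id u).const_add x)
      simpa [Function.comp_def] using this
    exact h0.mul_const (Q x)
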